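/- Suppose (P, ≤) is a partial order together with a family of preorders ≤_κ (κ ranging over regular cardinals) satisfying: p ≤_κ q implies p ≤ q. Assume κ-density reduction: for every dense D ⊆ P and p ∈ P there exist q ≤_κ p and d ⊆ D with |d| ≤ κ such that every r ≤ q extends to some s with s ≤ an element of d. Then for any sequence ⟨D_i : i < κ⟩ of dense subsets of P and any p ∈ P, assuming κ-closure of the ≤_κ orderings (every ≤_κ-descending sequence of length ≤ κ has a lower bound), there exist q ≤ p and a set d with |d| ≤ κ such that every r ≤ q is compatible with an element of D_i ∩ d for each i < κ. -/

import Mathlib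

open Cardinal

def Compat {P : Type*} [PartialOrder P] (p q : P) : Prop := ∃ r, r ≤ p ∧ r ≤ q

theorem stmt4 {P : Type*} [PartialOrder P] (κ : Cardinal) (hκ : κ.IsRegular)
    (leK : P → P → Prop)
    (hrefl : ∀ p, leK p p) (htrans : ∀ p q r, leK p q → leK q r → leK p r)
    (hrefine : ∀ p q, leK p q → p ≤ q)
    -- κ-density reduction
    (hred : ∀ D : Set P, (∀ p : P, ∃ q, q ≤ p ∧ q ∈ D) →
      ∀ p : P, ∃ q, leK q p ∧ ∃ d : Set P, d ⊆ D ∧ #d ≤ κ ∧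
        ∀ r, r ≤ q → ∃ s, s ≤ r ∧ ∃ x ∈ d, s ≤ x)
    -- κ-closure of the ≤_κ orderings
    (hclosed : ∀ δ : Ordinal, δ ≤ κ.ord → ∀ f : Ordinal → P,
      (∀ i j, i ≤ j → j < δ → leK (f j) (f i)) →
      ∃ p : P, ∀ i, i < δ → leK p (f i))
    (D : Ordinal → Set P)
    (hD : ∀ i, i < κ.ord → ∀ p : P, ∃ q, q ≤ p ∧ q ∈ D i)
    (p : P) :
    ∃ q, q ≤ p ∧ ∃ d : Set P, #d ≤ κ ∧
      ∀ i, i < κ.ord → ∀ r, r ≤ q → ∃ x ∈ D i ∩ d, Compat r x := by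
  classical
  -- the recursion body
  set body : ∀ i : Ordinal, (∀ j, j < i → P) → P := fun i rec =>
    if hi : i < κ.ord then
      (hred (D i) (hD i hi)
        (if h : ∃ b, leK b p ∧ ∀ j (hj : j < i), leK b (rec j hj) then h.choose else p)).choose
    else p with hbody
  set F : Ordinal → P := fun i => Ordinal.lt_wf.fix body i with hFdef
  have hF : ∀ i, F i = body i (fun j _ => F j) := fun i => Ordinal.lt_wf.fix_eq body i
  -- main invariant + density-reduction data at each stage
  have main : ∀ i, i < κ.ord →
      (leK (F i) p ∧ ∀ j, j < i → leK (F i) (F j)) ∧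
      ∃ d : Set P, d ⊆ D i ∧ #d ≤ κ ∧ ∀ r, r ≤ F i → ∃ s, s ≤ r ∧ ∃ x ∈ d, s ≤ x := by
    intro i
    induction i using Ordinal.induction with
    | h i IH =>
      intro hi
      have hex : ∃ b, leK b p ∧ ∀ j (hj : j < i), leK b (F j) := by
        rcases eq_or_ne i 0 with rfl | hne
        · exact ⟨p, hrefl p, fun j hj => absurd hj (not_lt_of_ge (zero_le (a := j)))⟩
        · have hpos : (0 : Ordinal) < i := pos_iff_ne_zero.2 hne
          obtain ⟨b, hb⟩ := hclosed i hi.le F (by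
            intro a c hac hci
            rcases eq_or_lt_of_le hac with rfl | h
            · exact hrefl _
            · exact ((IH c hci (hci.trans hi)).1).2 a h)
          exact ⟨b, htrans _ _ _ (hb 0 hpos) ((IH 0 hpos (hpos.trans hi)).1).1, hb⟩
      have hFi : F i = (hred (D i) (hD i hi) hex.choose).choose := by
        rw [hF i, hbody]
        simp only [dif_pos hi, dif_pos hex]
      have spec := (hred (D i) (hD i hi) hex.choose).choose_spec
      rw [← hFi] at spec
      obtain ⟨hle, d, hdsub, hdcard, hdprop⟩ := spec
      refine ⟨⟨htrans _ _ _ hle hex.choose_spec.1, fun j hj =>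
        htrans _ _ _ hle (hex.choose_spec.2 j hj)⟩, d, hdsub, hdcard, hdprop⟩
  -- take a lower bound of the whole sequence
  obtain ⟨q, hq⟩ := hclosed κ.ord le_rfl F (by
    intro a c hac hci
    rcases eq_or_lt_of_le hac with rfl | h
    · exact hrefl _
    · exact ((main c hci).1).2 a h)
  have hord0 : (0 : Ordinal) < κ.ord := by
    rw [Cardinal.lt_ord]
    simpa using (aleph0_pos.trans_le hκ.aleph0_le)
  have hqp : q ≤ p :=
    le_trans (hrefine _ _ (hq 0 hord0)) (hrefine _ _ ((main 0 hord0).1).1)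
  -- collect the small dense reducts
  have keyd : ∀ i : Set.Iio κ.ord, ∃ d : Set P, d ⊆ D i ∧ #d ≤ κ ∧
      ∀ r, r ≤ F i → ∃ s, s ≤ r ∧ ∃ x ∈ d, s ≤ x := fun i => (main i i.2).2
  choose dd hsub hcard hprop using keyd
  refine ⟨q, hqp, ⋃ i : κ.ord.ToType, dd ((@Ordinal.ToType.mk κ.ord).symm i), ?_, ?_⟩
  · calc #(⋃ i : κ.ord.ToType, dd ((@Ordinal.ToType.mk κ.ord).symm i))
        ≤ Cardinal.sum (fun i : κ.ord.ToType =>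
            #(dd ((@Ordinal.ToType.mk κ.ord).symm i))) := mk_iUnion_le_sum_mk
      _ ≤ Cardinal.sum (fun _ : κ.ord.ToType => κ) :=
          Cardinal.sum_le_sum _ _ (fun i => hcard _)
      _ = #κ.ord.ToType * κ := by rw [Cardinal.sum_const']
      _ = κ * κ := by rw [Cardinal.mk_ord_toType]
      _ = κ := Cardinal.mul_eq_self hκ.aleph0_le
  · intro i hi r hr
    have hrFi : r ≤ F i := le_trans hr (hrefine _ _ (hq i hi))
    obtain ⟨s, hsr, x, hxd, hsx⟩ := hprop ⟨i, hi⟩ r hrFi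
    refine ⟨x, ⟨hsub ⟨i, hi⟩ hxd, ?_⟩, s, hsr, hsx⟩
    refine Set.mem_iUnion.2 ⟨@Ordinal.ToType.mk κ.ord ⟨i, hi⟩, ?_⟩
    rwa [OrderIso.symm_apply_apply]
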